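/- Let f be an E-polynomial and ξ₁ ≠ ξ₂ two real zeros of f with Thom encodings (f, ε₁) and (f, ε₂), where ε_j : {0,…,D} → {−1,0,1}. Let k = max{0 ≤ i ≤ D : ε₁(i) ≠ ε₂(i)}; then ε₁(k+1) = ε₂(k+1) ≠ 0, and if ε₁(k+1) = 1 then ξ₁ > ξ₂ iff ε₁(k) > ε₂(k), while if ε₁(k+1) = −1 then ξ₁ > ξ₂ iff ε₁(k) < ε₂(k). -/

import Mathlib

noncomputable section

/-- Evaluation of a bivariate integer polynomial (a polynomial in `Y` with coefficients
in `ℤ[X]`) at `(x, y) ∈ ℝ²`. -/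
def ev (P : Polynomial (Polynomial ℤ)) (x y : ℝ) : ℝ :=
  Polynomial.eval₂ (Polynomial.eval₂RingHom (Int.castRingHom ℝ) x) y P

/-- The E-polynomial `x ↦ F(x, e^{h(x)})`. -/
def epoly (h : Polynomial ℤ) (F : Polynomial (Polynomial ℤ)) (x : ℝ) : ℝ :=
  ev F x (Real.exp (Polynomial.eval₂ (Int.castRingHom ℝ) x h))

/-- Partial derivative with respect to `X` (the inner variable). -/
def dX (P : Polynomial (Polynomial ℤ)) : Polynomial (Polynomial ℤ) :=
  P.sum fun n c => Polynomial.C (Polynomial.derivative c) * Polynomial.X ^ n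

/-- The polynomial `F̃ = ∂F/∂X + (∂F/∂Y)·h'(X)·Y` defining the derivative of the
E-polynomial `x ↦ F(x, e^{h(x)})`. -/
def FtildeE (h : Polynomial ℤ) (F : Polynomial (Polynomial ℤ)) : Polynomial (Polynomial ℤ) :=
  dX F + Polynomial.derivative F * (Polynomial.C (Polynomial.derivative h) * Polynomial.X)

/-- The pseudo-derivative at the level of defining polynomials: it is `F̃` when
`deg_X F(X,0) > 0`; when `F(X,0)` is constant and `F̃ ≠ 0` it is `F̃` divided by the
largest power `Y^k` dividing it; and it is `0` when `F̃ = 0`. -/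
def pderPoly (h : Polynomial ℤ) (F : Polynomial (Polynomial ℤ)) : Polynomial (Polynomial ℤ) :=
  let Ft := FtildeE h F
  if Ft = 0 then 0
  else if 0 < (F.coeff 0).natDegree then Ft
  else Polynomial.divX^[Ft.natTrailingDegree] Ft

/-- The `i`-th entry of the Thom encoding of `ξ` with respect to the E-polynomial
defined by `h` and `F`: the sign of the `i`-th iterated pseudo-derivative at `ξ`. -/
def thomSign (h : Polynomial ℤ) (F : Polynomial (Polynomial ℤ)) (i : ℕ) (ξ : ℝ) : ℝ :=
  Real.sign (epoly h ((pderPoly h)^[i] F) ξ)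

/-! ### Auxiliary lemmas -/

lemma dX_add' (p q : Polynomial (Polynomial ℤ)) : dX (p + q) = dX p + dX q := by
  unfold dX
  rw [Polynomial.sum_add_index]
  · intro i; simp
  · intro a b₁ b₂; simp [add_mul]

lemma FtildeE_add' (h : Polynomial ℤ) (p q : Polynomial (Polynomial ℤ)) :
    FtildeE h (p + q) = FtildeE h p + FtildeE h q := by
  unfold FtildeE
  rw [dX_add', Polynomial.derivative_add, add_mul]; ring

lemma hasDerivAt_inner (c : Polynomial ℤ) (x : ℝ) :
    HasDerivAt (fun x => Polynomial.eval₂ (Int.castRingHom ℝ) x c)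
      (Polynomial.eval₂ (Int.castRingHom ℝ) x (Polynomial.derivative c)) x := by
  simp only [Polynomial.eval₂_eq_eval_map, ← Polynomial.derivative_map]
  exact Polynomial.hasDerivAt _ x

lemma hasDerivAt_epoly (h : Polynomial ℤ) (F : Polynomial (Polynomial ℤ)) (x : ℝ) :
    HasDerivAt (epoly h F) (epoly h (FtildeE h F) x) x := by
  induction F using Polynomial.induction_on' with
  | add p q hp hq =>
    have e1 : epoly h (p + q) = fun y => epoly h p y + epoly h q y := by
      funext y; simp [epoly, ev, Polynomial.eval₂_add]
    rw [e1, FtildeE_add']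
    have e2 : epoly h (FtildeE h p + FtildeE h q) x
        = epoly h (FtildeE h p) x + epoly h (FtildeE h q) x := by
      simp [epoly, ev, Polynomial.eval₂_add]
    rw [e2]
    exact hp.add hq
  | monomial n c =>
    set H : ℝ → ℝ := fun x => Polynomial.eval₂ (Int.castRingHom ℝ) x h with hH
    have hEder : HasDerivAt (fun x => Real.exp (H x) ^ n)
        ((n : ℝ) * Real.exp (H x) ^ (n - 1) *
          (Real.exp (H x) * Polynomial.eval₂ (Int.castRingHom ℝ) x (Polynomial.derivative h))) x :=
      HasDerivAt.pow (n := n) ((hasDerivAt_inner h x).exp)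
    have hCder := hasDerivAt_inner c x
    have key := hCder.mul hEder
    have e1 : epoly h (Polynomial.monomial n c) = fun x =>
        Polynomial.eval₂ (Int.castRingHom ℝ) x c * Real.exp (H x) ^ n := by
      funext y; simp [epoly, ev, Polynomial.eval₂_monomial, Polynomial.coe_eval₂RingHom, hH]
    rw [e1]
    refine key.congr_deriv (Eq.symm ?_)
    have e2 : FtildeE h (Polynomial.monomial n c) =
        Polynomial.C (Polynomial.derivative c) * Polynomial.X ^ n +
          (Polynomial.monomial (n-1)) (c * n) *
            (Polynomial.C (Polynomial.derivative h) * Polynomial.X) := by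
      unfold FtildeE dX
      rw [Polynomial.sum_monomial_index, Polynomial.derivative_monomial]
      simp
    rw [e2]
    simp only [epoly, ev, Polynomial.eval₂_add, Polynomial.eval₂_mul, Polynomial.eval₂_monomial,
      Polynomial.eval₂_C, Polynomial.eval₂_X, Polynomial.eval₂_pow, Polynomial.coe_eval₂RingHom]
    cases n with
    | zero => simp
    | succ m =>
      simp only [Nat.add_sub_cancel]
      push_cast
      simp only [Polynomial.eval₂_add, Polynomial.eval₂_natCast, Polynomial.eval₂_one]
      rw [pow_succ]
      ring

lemma differentiable_epoly (h : Polynomial ℤ) (F : Polynomial (Polynomial ℤ)) :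
    Differentiable ℝ (epoly h F) := fun x => (hasDerivAt_epoly h F x).differentiableAt

lemma coeff_divX_iterate {R : Type*} [Semiring R] (m : ℕ) (p : Polynomial R) (i : ℕ) :
    (Polynomial.divX^[m] p).coeff i = p.coeff (i + m) := by
  induction m generalizing p with
  | zero => simp
  | succ n ih =>
    rw [Function.iterate_succ_apply, ih, Polynomial.coeff_divX]
    ring_nf

lemma ev_divX_iterate (x y : ℝ) : ∀ (m : ℕ) (p : Polynomial (Polynomial ℤ)),
    (∀ i < m, p.coeff i = 0) → ev p x y = ev (Polynomial.divX^[m] p) x y * y ^ m := by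
  intro m
  induction m with
  | zero => simp
  | succ n ih =>
    intro p hp
    have h0 : p.coeff 0 = 0 := hp 0 (Nat.succ_pos n)
    have hpX : p.divX * Polynomial.X = p := by
      have := Polynomial.divX_mul_X_add p
      rwa [h0, map_zero, add_zero] at this
    have hcoeff : ∀ i < n, p.divX.coeff i = 0 := by
      intro i hi
      rw [Polynomial.coeff_divX]
      exact hp (i + 1) (by omega)
    calc ev p x y = ev (p.divX * Polynomial.X) x y := by rw [hpX]
      _ = ev p.divX x y * y := by simp [ev, Polynomial.eval₂_mul]
      _ = ev (Polynomial.divX^[n] p.divX) x y * y ^ n * y := by rw [ih p.divX hcoeff]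
      _ = ev (Polynomial.divX^[n + 1] p) x y * y ^ (n + 1) := by
          rw [Function.iterate_succ_apply, pow_succ]; ring

lemma sign_mul_pos_right (a c : ℝ) (hc : 0 < c) : Real.sign (a * c) = Real.sign a := by
  rcases lt_trichotomy a 0 with ha | ha | ha
  · rw [Real.sign_of_neg ha, Real.sign_of_neg (mul_neg_of_neg_of_pos ha hc)]
  · simp [ha]
  · rw [Real.sign_of_pos ha, Real.sign_of_pos (mul_pos ha hc)]

lemma sign_le_sign' {a b : ℝ} (hab : a ≤ b) : Real.sign a ≤ Real.sign b := by
  rcases lt_trichotomy a 0 with ha | ha | ha <;> rcases lt_trichotomy b 0 with hb | hb | hb <;>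
    simp only [Real.sign_of_neg, Real.sign_of_pos, Real.sign_zero, *] <;>
    first
      | linarith
      | norm_num

lemma pos_of_sign_eq_one {a : ℝ} (ha : Real.sign a = 1) : 0 < a := by
  rcases lt_trichotomy a 0 with h | h | h
  · rw [Real.sign_of_neg h] at ha; norm_num at ha
  · rw [h, Real.sign_zero] at ha; norm_num at ha
  · exact h

lemma neg_of_sign_eq_neg_one {a : ℝ} (ha : Real.sign a = -1) : a < 0 := by
  rcases lt_trichotomy a 0 with h | h | h
  · exact h
  · rw [h, Real.sign_zero] at ha; norm_num at ha
  · rw [Real.sign_of_pos h] at ha; norm_num at ha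

/-- The sign of the pseudo-derivative agrees pointwise with the sign of `F̃`. -/
lemma sign_epoly_pder (h : Polynomial ℤ) (F : Polynomial (Polynomial ℤ)) (x : ℝ) :
    Real.sign (epoly h (pderPoly h F) x) = Real.sign (epoly h (FtildeE h F) x) := by
  rw [pderPoly]
  split_ifs with h1 h2
  · rw [h1]
  · rfl
  · have := ev_divX_iterate x (Real.exp (Polynomial.eval₂ (Int.castRingHom ℝ) x h))
      (FtildeE h F).natTrailingDegree (FtildeE h F)
      (fun i hi => Polynomial.coeff_eq_zero_of_lt_natTrailingDegree hi)
    show Real.sign (epoly h (Polynomial.divX^[(FtildeE h F).natTrailingDegree] (FtildeE h F)) x) = _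
    unfold epoly
    rw [this, sign_mul_pos_right _ _ (pow_pos (Real.exp_pos _) _)]

/-- The sign of the derivative of the E-polynomial agrees with the sign of the
pseudo-derivative. -/
lemma sign_deriv_epoly (h : Polynomial ℤ) (F : Polynomial (Polynomial ℤ)) (x : ℝ) :
    Real.sign (deriv (epoly h F) x) = Real.sign (epoly h (pderPoly h F) x) := by
  rw [(hasDerivAt_epoly h F x).deriv, sign_epoly_pder]

lemma eq_on_uIcc_of_deriv_zero (f : ℝ → ℝ) (hf : Differentiable ℝ f) (a b : ℝ)
    (h0 : ∀ x ∈ Set.uIcc a b, deriv f x = 0) : ∀ x ∈ Set.uIcc a b, f x = f a := by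
  have hmono : MonotoneOn f (Set.uIcc a b) :=
    monotoneOn_of_deriv_nonneg (convex_uIcc a b) hf.continuous.continuousOn
      (hf.differentiableOn)
      (fun x hx => le_of_eq (h0 x (interior_subset hx)).symm)
  have hanti : AntitoneOn f (Set.uIcc a b) :=
    antitoneOn_of_deriv_nonpos (convex_uIcc a b) hf.continuous.continuousOn
      (hf.differentiableOn)
      (fun x hx => le_of_eq (h0 x (interior_subset hx)))
  intro x hx
  rcases le_total x a with hxa | hxa
  · exact le_antisymm (hmono hx Set.left_mem_uIcc hxa) (hanti hx Set.left_mem_uIcc hxa)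
  · exact le_antisymm (hanti Set.left_mem_uIcc hx hxa) (hmono Set.left_mem_uIcc hx hxa)

/-- If `f` is strictly monotone on `[a ⊓ b, a ⊔ b]` and has equal nonzero-or-zero
signs at the endpoints, its sign is constant on the interval. -/
lemma sign_const_on_uIcc (f : ℝ → ℝ) (a b : ℝ) (hab : a ≠ b)
    (hmono : StrictMonoOn f (Set.uIcc a b))
    (hsign : Real.sign (f a) = Real.sign (f b)) :
    ∀ x ∈ Set.uIcc a b, Real.sign (f x) = Real.sign (f a) := by
  rcases lt_or_gt_of_ne hab with hlt | hlt
  · -- a < b, uIcc = Icc a b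
    have hIcc : Set.uIcc a b = Set.Icc a b := Set.uIcc_of_le hlt.le
    intro x hx
    rw [hIcc] at hx hmono
    have hfab : f a < f b := hmono (Set.left_mem_Icc.2 hlt.le) (Set.right_mem_Icc.2 hlt.le) hlt
    have h1 : f a ≤ f x := by
      rcases eq_or_lt_of_le hx.1 with he | hl
      · rw [← he]
      · exact (hmono (Set.left_mem_Icc.2 hlt.le) hx hl).le
    have h2 : f x ≤ f b := by
      rcases eq_or_lt_of_le hx.2 with he | hl
      · rw [he]
      · exact (hmono hx (Set.right_mem_Icc.2 hlt.le) hl).le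
    rcases lt_trichotomy (f a) 0 with hfa | hfa | hfa
    · have hfb : f b < 0 := by
        by_contra hge
        push_neg at hge
        rcases eq_or_lt_of_le hge with he | hpos
        · rw [Real.sign_of_neg hfa, ← he, Real.sign_zero] at hsign; norm_num at hsign
        · rw [Real.sign_of_neg hfa, Real.sign_of_pos hpos] at hsign; norm_num at hsign
      rw [Real.sign_of_neg hfa, Real.sign_of_neg (lt_of_le_of_lt h2 hfb)]
    · have : f b = 0 ∨ f b ≠ 0 := em _
      exfalso
      rcases lt_trichotomy (f b) 0 with hfb | hfb | hfb
      · linarith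
      · linarith
      · rw [hfa, Real.sign_zero, Real.sign_of_pos hfb] at hsign; norm_num at hsign
    · rw [Real.sign_of_pos hfa, Real.sign_of_pos (lt_of_lt_of_le hfa h1)]
  · -- b < a
    have hIcc : Set.uIcc a b = Set.Icc b a := by rw [Set.uIcc_comm]; exact Set.uIcc_of_le hlt.le
    intro x hx
    rw [hIcc] at hx hmono
    have hfba : f b < f a := hmono (Set.left_mem_Icc.2 hlt.le) (Set.right_mem_Icc.2 hlt.le) hlt
    have h1 : f b ≤ f x := by
      rcases eq_or_lt_of_le hx.1 with he | hl
      · rw [← he]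
      · exact (hmono (Set.left_mem_Icc.2 hlt.le) hx hl).le
    have h2 : f x ≤ f a := by
      rcases eq_or_lt_of_le hx.2 with he | hl
      · rw [he]
      · exact (hmono hx (Set.right_mem_Icc.2 hlt.le) hl).le
    rcases lt_trichotomy (f b) 0 with hfb | hfb | hfb
    · have hfa : f a < 0 := by
        by_contra hge
        push_neg at hge
        rcases eq_or_lt_of_le hge with he | hpos
        · rw [Real.sign_of_neg hfb, ← he, Real.sign_zero] at hsign; norm_num at hsign
        · rw [Real.sign_of_neg hfb, Real.sign_of_pos hpos] at hsign; norm_num at hsign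
      rw [Real.sign_of_neg hfa, Real.sign_of_neg (lt_of_le_of_lt h2 hfa)]
    · exfalso
      rcases lt_trichotomy (f a) 0 with hfa | hfa | hfa
      · linarith
      · linarith
      · rw [hfb, Real.sign_zero, Real.sign_of_pos hfa] at hsign; norm_num at hsign
    · have hfa : 0 < f a := lt_trans hfb hfba
      rw [Real.sign_of_pos hfa, Real.sign_of_pos (lt_of_lt_of_le hfb h1)]

theorem thom_encoding_order (h : Polynomial ℤ) (hh : 0 < h.natDegree)
    (F : Polynomial (Polynomial ℤ)) (hF : F ≠ 0) (D : ℕ)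
    (hD : (pderPoly h)^[D + 1] F = 0)
    (hDmin : ∀ i < D, (pderPoly h)^[i + 1] F ≠ 0)
    (ξ₁ ξ₂ : ℝ) (hξ : ξ₁ ≠ ξ₂) (h1 : epoly h F ξ₁ = 0) (h2 : epoly h F ξ₂ = 0)
    (k : ℕ) (hkD : k ≤ D)
    (hkdiff : thomSign h F k ξ₁ ≠ thomSign h F k ξ₂)
    (hkmax : ∀ i, k < i → i ≤ D → thomSign h F i ξ₁ = thomSign h F i ξ₂) :
    k < D ∧
    thomSign h F (k + 1) ξ₁ = thomSign h F (k + 1) ξ₂ ∧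
    thomSign h F (k + 1) ξ₁ ≠ 0 ∧
    (thomSign h F (k + 1) ξ₁ = 1 →
      (ξ₂ < ξ₁ ↔ thomSign h F k ξ₂ < thomSign h F k ξ₁)) ∧
    (thomSign h F (k + 1) ξ₁ = -1 →
      (ξ₂ < ξ₁ ↔ thomSign h F k ξ₁ < thomSign h F k ξ₂)) := by
  set G : ℕ → Polynomial (Polynomial ℤ) := fun i => (pderPoly h)^[i] F with hG
  set g : ℕ → ℝ → ℝ := fun i => epoly h (G i) with hg
  have hts : ∀ i ξ, thomSign h F i ξ = Real.sign (g i ξ) := fun _ _ => rfl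
  have hdiffg : ∀ i, Differentiable ℝ (g i) := fun i => differentiable_epoly h (G i)
  have hds : ∀ i x, Real.sign (deriv (g i) x) = Real.sign (g (i + 1) x) := by
    intro i x
    have hsucc : G (i + 1) = pderPoly h (G i) := Function.iterate_succ_apply' _ _ _
    show Real.sign (deriv (epoly h (G i)) x) = Real.sign (epoly h (G (i + 1)) x)
    rw [hsucc]
    exact sign_deriv_epoly h (G i) x
  -- constancy of sign of `g i` on the interval for `k < i`
  have key : ∀ n i, i + n = D + 1 → k < i →
      ∀ x ∈ Set.uIcc ξ₁ ξ₂, Real.sign (g i x) = Real.sign (g i ξ₁) := by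
    intro n
    induction n with
    | zero =>
      intro i hiD _ x _
      have hi : i = D + 1 := by omega
      subst hi
      have hGz : G (D + 1) = 0 := hD
      show Real.sign (epoly h (G (D + 1)) x) = Real.sign (epoly h (G (D + 1)) ξ₁)
      rw [hGz]
      simp [epoly, ev]
    | succ n ih =>
      intro i hiD hki x hx
      have hIH := ih (i + 1) (by omega) (by omega)
      have hi_le : i ≤ D := by omega
      have hend : Real.sign (g i ξ₁) = Real.sign (g i ξ₂) := hkmax i hki hi_le
      have hderiv : ∀ y ∈ Set.uIcc ξ₁ ξ₂,
          Real.sign (deriv (g i) y) = Real.sign (g (i + 1) ξ₁) :=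
        fun y hy => (hds i y).trans (hIH y hy)
      rcases lt_trichotomy (g (i + 1) ξ₁) 0 with hs | hs | hs
      · -- derivative negative on the interval : strictly antitone
        have hneg : ∀ y ∈ Set.uIcc ξ₁ ξ₂, deriv (g i) y < 0 := by
          intro y hy
          apply neg_of_sign_eq_neg_one
          rw [hderiv y hy, Real.sign_of_neg hs]
        have hanti : StrictAntiOn (g i) (Set.uIcc ξ₁ ξ₂) :=
          strictAntiOn_of_deriv_neg (convex_uIcc _ _) (hdiffg i).continuous.continuousOn
            (fun y hy => hneg y (interior_subset hy))
        have hmono : StrictMonoOn (fun y => -(g i y)) (Set.uIcc ξ₁ ξ₂) := by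
          intro u hu v hv huv
          simpa using hanti hu hv huv
        have := sign_const_on_uIcc (fun y => -(g i y)) ξ₁ ξ₂ hξ hmono
          (by simp only [Real.sign_neg]; rw [hend]) x hx
        simp only [Real.sign_neg, neg_inj] at this
        exact this
      · -- derivative zero on the interval : constant
        have hzero : ∀ y ∈ Set.uIcc ξ₁ ξ₂, deriv (g i) y = 0 := by
          intro y hy
          apply Real.sign_eq_zero_iff.mp
          rw [hderiv y hy, hs, Real.sign_zero]
        have := eq_on_uIcc_of_deriv_zero (g i) (hdiffg i) ξ₁ ξ₂ hzero x hx
        rw [this]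
      · -- derivative positive on the interval : strictly monotone
        have hpos : ∀ y ∈ Set.uIcc ξ₁ ξ₂, 0 < deriv (g i) y := by
          intro y hy
          apply pos_of_sign_eq_one
          rw [hderiv y hy, Real.sign_of_pos hs]
        have hmono : StrictMonoOn (g i) (Set.uIcc ξ₁ ξ₂) :=
          strictMonoOn_of_deriv_pos (convex_uIcc _ _) (hdiffg i).continuous.continuousOn
            (fun y hy => hpos y (interior_subset hy))
        exact sign_const_on_uIcc (g i) ξ₁ ξ₂ hξ hmono hend x hx
  -- constancy at level k + 1
  have hkey : ∀ x ∈ Set.uIcc ξ₁ ξ₂, Real.sign (g (k + 1) x) = Real.sign (g (k + 1) ξ₁) :=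
    key (D - k) (k + 1) (by omega) (by omega)
  have heq : Real.sign (g (k + 1) ξ₂) = Real.sign (g (k + 1) ξ₁) :=
    hkey ξ₂ Set.right_mem_uIcc
  -- the common sign at level k + 1 is nonzero
  have hs0 : Real.sign (g (k + 1) ξ₁) ≠ 0 := by
    intro h0
    have hzero : ∀ y ∈ Set.uIcc ξ₁ ξ₂, deriv (g k) y = 0 := by
      intro y hy
      apply Real.sign_eq_zero_iff.mp
      rw [hds k y, hkey y hy, h0]
    have := eq_on_uIcc_of_deriv_zero (g k) (hdiffg k) ξ₁ ξ₂ hzero ξ₂ Set.right_mem_uIcc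
    exact hkdiff (by rw [hts, hts, this])
  have hkD' : k < D := by
    rcases eq_or_lt_of_le hkD with he | hl
    · exfalso
      apply hs0
      have : G (k + 1) = 0 := by rw [he]; exact hD
      show Real.sign (epoly h (G (k + 1)) ξ₁) = 0
      rw [this]
      simp [epoly, ev]
    · exact hl
  refine ⟨hkD', ?_, ?_, ?_, ?_⟩
  · rw [hts, hts]; exact heq.symm
  · rw [hts]; exact hs0
  · -- sign 1 : strictly increasing
    intro hone
    rw [hts] at hone
    have hpos : ∀ y ∈ Set.uIcc ξ₁ ξ₂, 0 < deriv (g k) y := by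
      intro y hy
      apply pos_of_sign_eq_one
      rw [hds k y, hkey y hy, hone]
    have hmono : StrictMonoOn (g k) (Set.uIcc ξ₁ ξ₂) :=
      strictMonoOn_of_deriv_pos (convex_uIcc _ _) (hdiffg k).continuous.continuousOn
        (fun y hy => hpos y (interior_subset hy))
    rw [hts, hts]
    constructor
    · intro hlt
      have hval : g k ξ₂ < g k ξ₁ :=
        hmono Set.right_mem_uIcc Set.left_mem_uIcc hlt
      exact lt_of_le_of_ne (sign_le_sign' hval.le) (fun he => hkdiff (by rw [hts, hts, he]))
    · intro hsg
      by_contra hnlt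
      push_neg at hnlt
      have hlt : ξ₁ < ξ₂ := lt_of_le_of_ne hnlt hξ
      have hval : g k ξ₁ < g k ξ₂ :=
        hmono Set.left_mem_uIcc Set.right_mem_uIcc hlt
      exact absurd (sign_le_sign' hval.le) (not_le_of_gt hsg)
  · -- sign -1 : strictly decreasing
    intro hneg1
    rw [hts] at hneg1
    have hneg : ∀ y ∈ Set.uIcc ξ₁ ξ₂, deriv (g k) y < 0 := by
      intro y hy
      apply neg_of_sign_eq_neg_one
      rw [hds k y, hkey y hy, hneg1]
    have hanti : StrictAntiOn (g k) (Set.uIcc ξ₁ ξ₂) :=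
      strictAntiOn_of_deriv_neg (convex_uIcc _ _) (hdiffg k).continuous.continuousOn
        (fun y hy => hneg y (interior_subset hy))
    rw [hts, hts]
    constructor
    · intro hlt
      have hval : g k ξ₁ < g k ξ₂ :=
        hanti Set.right_mem_uIcc Set.left_mem_uIcc hlt
      exact lt_of_le_of_ne (sign_le_sign' hval.le) (fun he => hkdiff (by rw [hts, hts, he.symm]))
    · intro hsg
      by_contra hnlt
      push_neg at hnlt
      have hlt : ξ₁ < ξ₂ := lt_of_le_of_ne hnlt hξ
      have hval : g k ξ₂ < g k ξ₁ :=
        hanti Set.left_mem_uIcc Set.right_mem_uIcc hlt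
      exact absurd (sign_le_sign' hval.le) (not_le_of_gt hsg)

end
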